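/- Let S₁, …, Sₘ be closed subsets of C \ {0}, where C is a salient closed convex cone in a finite-dimensional real vector space E (salient means x ∈ C and -x ∈ C imply x = 0). Then the Minkowski sum S₁ + ⋯ + Sₘ is closed. -/

import Mathlib

open Pointwise

open Pointwise Bornology Filter Set

theorem key_norm_bound
    {E : Type*} [NormedAddCommGroup E] [NormedSpace ℝ E] [FiniteDimensional ℝ E]
    (C : Set E) (hCclosed : IsClosed C)
    (hCcone : ∀ t : ℝ, 0 < t → t • C ⊆ C)
    (hCsalient : ∀ x ∈ C, -x ∈ C → x = 0) :
    ∃ c > (0:ℝ), ∀ x ∈ C, ∀ y ∈ C, c * ‖x‖ ≤ ‖x + y‖ := by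
  by_contra h
  push_neg at h
  -- for each n, pick x y with ‖x+y‖ < (1/(n+1)) ‖x‖
  have h' : ∀ n : ℕ, ∃ x ∈ C, ∃ y ∈ C, ‖x + y‖ < (1/(n+1)) * ‖x‖ := by
    intro n
    exact h (1/(n+1)) (by positivity)
  choose x hx y hy hxy using h'
  have hxpos : ∀ n, 0 < ‖x n‖ := by
    intro n
    by_contra hn
    push_neg at hn
    have h0 : ‖x n‖ = 0 := le_antisymm hn (norm_nonneg _)
    have h1 := hxy n
    rw [h0, mul_zero] at h1
    exact absurd h1 (not_lt.2 (norm_nonneg _))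
  set u : ℕ → E := fun n => ‖x n‖⁻¹ • x n with hu
  set v : ℕ → E := fun n => ‖x n‖⁻¹ • y n with hv
  have huC : ∀ n, u n ∈ C := fun n => hCcone _ (inv_pos.2 (hxpos n)) ⟨x n, hx n, rfl⟩
  have hvC : ∀ n, v n ∈ C := fun n => hCcone _ (inv_pos.2 (hxpos n)) ⟨y n, hy n, rfl⟩
  have hunorm : ∀ n, ‖u n‖ = 1 := by
    intro n
    simp [hu, norm_smul, inv_mul_cancel₀ (hxpos n).ne']
  have hsum : ∀ n, ‖u n + v n‖ < 1/(n+1) := by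
    intro n
    have : u n + v n = ‖x n‖⁻¹ • (x n + y n) := by
      simp [hu, hv, smul_add]
    rw [this, norm_smul, norm_inv, norm_norm]
    rw [inv_mul_lt_iff₀ (hxpos n)]
    calc ‖x n + y n‖ < (1/(n+1)) * ‖x n‖ := hxy n
      _ = ‖x n‖ * (1/(n+1)) := by ring
      _ ≤ _ := by rw [mul_comm]
  have hvbound : ∀ n, ‖v n‖ ≤ 2 := by
    intro n
    have h1 : ‖v n‖ ≤ ‖u n + v n‖ + ‖u n‖ := by
      have := norm_add_le (u n + v n) (-(u n))
      simpa using this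
    have h2 : ‖u n + v n‖ ≤ 1 := le_of_lt (lt_of_lt_of_le (hsum n) (by
      rw [div_le_one (by positivity)]; linarith [Nat.cast_nonneg (α := ℝ) n]))
    rw [hunorm n] at h1; linarith
  -- extract convergent subsequences
  have hbdd : IsBounded (Metric.closedBall (0:E×E) 3) := Metric.isBounded_closedBall
  have hmem : ∀ n, ((u n, v n) : E × E) ∈ Metric.closedBall (0:E×E) 3 := by
    intro n
    rw [Metric.mem_closedBall, dist_zero_right, Prod.norm_def]
    simp only [sup_le_iff]
    constructor
    · rw [hunorm n]; norm_num
    · linarith [hvbound n]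
  obtain ⟨p, hp, φ, hφ, hconv⟩ := tendsto_subseq_of_bounded hbdd hmem
  have huconv : Tendsto (fun n => u (φ n)) atTop (nhds p.1) :=
    (continuous_fst.tendsto p).comp hconv
  have hvconv : Tendsto (fun n => v (φ n)) atTop (nhds p.2) :=
    (continuous_snd.tendsto p).comp hconv
  have hp1C : p.1 ∈ C := hCclosed.mem_of_tendsto huconv (Eventually.of_forall fun n => huC _)
  have hp2C : p.2 ∈ C := hCclosed.mem_of_tendsto hvconv (Eventually.of_forall fun n => hvC _)
  have hzero : Tendsto (fun n => u (φ n) + v (φ n)) atTop (nhds 0) := by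
    rw [tendsto_zero_iff_norm_tendsto_zero]
    apply squeeze_zero (fun n => norm_nonneg _) (fun n => le_of_lt (hsum (φ n)))
    have : Tendsto (fun n : ℕ => 1/((n:ℝ)+1)) atTop (nhds 0) := tendsto_one_div_add_atTop_nhds_zero_nat
    exact this.comp (hφ.tendsto_atTop)
  have hsum' : p.1 + p.2 = 0 := tendsto_nhds_unique (huconv.add hvconv) hzero
  have : -p.1 ∈ C := by rw [neg_eq_of_add_eq_zero_right hsum' |>.symm] at hp2C; exact hp2C
  have hp10 : p.1 = 0 := hCsalient _ hp1C this
  have hone : Tendsto (fun n : ℕ => ‖u (φ n)‖) atTop (nhds 1) := by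
    simp only [hunorm]; exact tendsto_const_nhds
  have h1 : ‖p.1‖ = 1 := tendsto_nhds_unique huconv.norm hone
  rw [hp10, norm_zero] at h1
  norm_num at h1

/-- If `S₁, …, Sₘ` are closed subsets of `C \ {0}`, where `C` is a salient closed convex
cone in a finite-dimensional real normed space, then the Minkowski sum `S₁ + ⋯ + Sₘ`
is closed. -/
theorem isClosed_sum_of_subsets_salient_cone
    {E : Type*} [NormedAddCommGroup E] [NormedSpace ℝ E] [FiniteDimensional ℝ E]
    (C : Set E) (hCclosed : IsClosed C) (hCconv : Convex ℝ C)
    (hCcone : ∀ t : ℝ, 0 < t → t • C ⊆ C)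
    (hCsalient : ∀ x ∈ C, -x ∈ C → x = 0)
    (m : ℕ) (S : Fin m → Set E)
    (hSclosed : ∀ i, IsClosed (S i))
    (hSsub : ∀ i, S i ⊆ C \ {0}) :
    IsClosed (∑ i, S i) := by
  rcases Nat.eq_zero_or_pos m with hm | hm
  · subst hm
    simp only [Finset.univ_eq_empty, Finset.sum_empty]
    rw [show (0 : Set E) = {0} from rfl]
    exact isClosed_singleton
  obtain ⟨c, hc, hkey⟩ := key_norm_bound C hCclosed hCcone hCsalient
  have hadd : ∀ x ∈ C, ∀ y ∈ C, x + y ∈ C := by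
    intro x hx y hy
    have hmid : (1/2 : ℝ) • x + (1/2 : ℝ) • y ∈ C :=
      hCconv hx hy (by norm_num) (by norm_num) (by norm_num)
    have := hCcone 2 (by norm_num) ⟨_, hmid, rfl⟩
    simpa [smul_add, smul_smul] using this
  rw [← isSeqClosed_iff_isClosed]
  intro x p hx hlim
  choose g hg hgsum using fun n => (Set.mem_fintype_sum S (x n)).1 (hx n)
  -- C is nonempty, so 0 ∈ C
  set j0 : Fin m := ⟨0, hm⟩
  have hzC : g 0 j0 ∈ C := (hSsub j0 (hg 0 j0)).1
  have h0C : (0 : E) ∈ C := by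
    have htend : Filter.Tendsto (fun n : ℕ => (1/((n:ℝ)+1)) • g 0 j0)
        Filter.atTop (nhds 0) := by
      simpa using (show Tendsto (fun n : ℕ => 1/((n:ℝ)+1)) atTop (nhds 0) from
        tendsto_one_div_add_atTop_nhds_zero_nat).smul_const (g 0 j0)
    exact hCclosed.mem_of_tendsto htend
      (Filter.Eventually.of_forall fun n => hCcone _ (by positivity) ⟨_, hzC, rfl⟩)
  have hsumC : ∀ (t : Finset (Fin m)) (f : Fin m → E), (∀ i, f i ∈ C) → ∑ i ∈ t, f i ∈ C := by
    intro t f hf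
    induction t using Finset.induction with
    | empty => simpa using h0C
    | insert a s h ih => rw [Finset.sum_insert h]; exact hadd _ (hf _) _ ih
  -- bound on components
  obtain ⟨M, hM⟩ := _root_.isBounded_iff_forall_norm_le.1 hlim.cauchySeq.isBounded_range
  have hMx : ∀ n, ‖x n‖ ≤ M := fun n => hM _ (Set.mem_range_self n)
  have hgC : ∀ n i, g n i ∈ C := fun n i => (hSsub i (hg n i)).1
  have hcomp : ∀ n j, ‖g n j‖ ≤ M / c := by
    intro n j
    have hrest : ∑ i ∈ Finset.univ.erase j, g n i ∈ C :=
      hsumC _ _ (fun i => hgC n i)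
    have hxn : g n j + ∑ i ∈ Finset.univ.erase j, g n i = x n := by
      rw [Finset.add_sum_erase _ _ (Finset.mem_univ j)]
      exact hgsum n
    have := hkey _ (hgC n j) _ hrest
    rw [hxn] at this
    rw [le_div_iff₀ hc, mul_comm]
    exact this.trans (hMx n)
  have hGball : ∀ n, g n ∈ Metric.closedBall (0 : Fin m → E) (M / c) := by
    intro n
    rw [Metric.mem_closedBall, dist_zero_right]
    refine pi_norm_le_iff_of_nonneg ?_ |>.2 fun i => hcomp n i
    have : (0:ℝ) ≤ ‖g 0 j0‖ := norm_nonneg _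
    linarith [hcomp 0 j0, this]
  obtain ⟨L, _, φ, hφ, hconv⟩ :=
    tendsto_subseq_of_bounded Metric.isBounded_closedBall hGball
  have hcompconv : ∀ i, Filter.Tendsto (fun n => g (φ n) i) Filter.atTop (nhds (L i)) :=
    fun i => tendsto_pi_nhds.1 hconv i
  have hLS : ∀ i, L i ∈ S i := fun i =>
    (hSclosed i).mem_of_tendsto (hcompconv i) (Filter.Eventually.of_forall fun n => hg _ i)
  have hsumL : ∑ i, L i = p := by
    have h1 : Filter.Tendsto (fun n => ∑ i, g (φ n) i) Filter.atTop (nhds (∑ i, L i)) :=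
      tendsto_finset_sum _ fun i _ => hcompconv i
    have h2 : Filter.Tendsto (fun n => ∑ i, g (φ n) i) Filter.atTop (nhds p) := by
      simp only [hgsum]
      exact hlim.comp hφ.tendsto_atTop
    exact tendsto_nhds_unique h1 h2
  exact (Set.mem_fintype_sum S p).2 ⟨L, hLS, hsumL⟩
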